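/- Let P be a probability measure on a measurable space X, let f ∈ L²(P), let μ > 0, and suppose λ* ∈ ℝ satisfies E_P[(μ/2)·max(f − λ*, 0)] = 1. Then among all (nonnegative) finite measures R on X with R ≪ P, R(X) = 1, and dR/dP ∈ L²(P), the functional R ↦ (1/μ)·D₂(R‖P) − ∫ f dR is minimized at the measure R* with dR*/dP = (μ/2)·max(f − λ*, 0). -/

import Mathlib

open MeasureTheory

private lemma key_pt (μ a b : ℝ) (hμ : 0 < μ) (hb : 0 ≤ b) :
    (1 / μ) * ((μ / 2) * max a 0) ^ 2 - a * ((μ / 2) * max a 0) ≤ (1 / μ) * b ^ 2 - a * b := by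
  rcases le_or_gt a 0 with h | h
  · rw [max_eq_right h]
    have h1 : 0 ≤ (1 / μ) * b ^ 2 := by positivity
    have h2 : a * b ≤ 0 := mul_nonpos_of_nonpos_of_nonneg h hb
    simp only [mul_zero]
    linarith
  · rw [max_eq_left h.le]
    have h2 : 0 ≤ (1 / μ) * (b - μ / 2 * a) ^ 2 := by positivity
    have h3 : (1 / μ) * (b - μ / 2 * a) ^ 2
        = (1 / μ) * b ^ 2 - a * b - ((1 / μ) * ((μ / 2) * a) ^ 2 - a * ((μ / 2) * a)) := by
      field_simp
      ring
    linarith [h3 ▸ h2]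

/-- the balancing-weights dual with nonnegative weights.  Nonnegative finite
measures `R ≪ P` with `R(X) = 1` and `dR/dP ∈ L²(P)` are encoded by their densities
`w = dR/dP ≥ 0` (P-a.e.), so `∫ f dR = ∫ f·w dP` and `D₂(R‖P) = ∫ (w² − 1) dP`.  If
`λ*` satisfies `E_P[(μ/2)·max(f − λ*, 0)] = 1`, then the functional
`R ↦ (1/μ)·D₂(R‖P) − ∫ f dR` is minimized over this class at the measure with density
`w* = (μ/2)·max(f − λ*, 0)`. -/
theorem stmt_12 {X : Type*} [MeasurableSpace X] (P : Measure X) [IsProbabilityMeasure P]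
    (f : X → ℝ) (hf : MemLp f 2 P) (μ : ℝ) (hμ : 0 < μ)
    (lamstar : ℝ)
    (hlam : (∫ x, (μ / 2) * max (f x - lamstar) 0 ∂P) = 1)
    (wstar : X → ℝ) (hwstar : wstar = fun x => (μ / 2) * max (f x - lamstar) 0)
    (J : (X → ℝ) → ℝ)
    (hJ : J = fun w => (1 / μ) * (∫ x, ((w x) ^ 2 - 1) ∂P) - ∫ x, f x * w x ∂P) :
    -- w* is a feasible density: nonnegative, L², and normalized
    ((∀ x, 0 ≤ wstar x) ∧ MemLp wstar 2 P ∧ (∫ x, wstar x ∂P) = 1) ∧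
    -- minimality among all nonnegative feasible densities
    (∀ w : X → ℝ, 0 ≤ᵐ[P] w → MemLp w 2 P → (∫ x, w x ∂P) = 1 → J wstar ≤ J w) := by
  subst hwstar hJ
  set ws : X → ℝ := fun x => (μ / 2) * max (f x - lamstar) 0 with hws
  -- nonnegativity
  have hws_nonneg : ∀ x, 0 ≤ ws x := fun x =>
    mul_nonneg (by positivity) (le_max_right _ _)
  -- membership in L²
  have h1 : MemLp (fun x => f x - lamstar) 2 P := hf.sub (memLp_const _)
  have h2 : MemLp (fun x => max (f x - lamstar) 0) 2 P := by
    refine MemLp.of_le h1 ?_ ?_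
    · exact h1.aestronglyMeasurable.sup aestronglyMeasurable_const
    · filter_upwards with x
      rw [Real.norm_eq_abs, Real.norm_eq_abs, abs_of_nonneg (le_max_right _ _)]
      exact max_le (le_abs_self _) (abs_nonneg _)
  have hws_mem : MemLp ws 2 P := h2.const_mul (μ / 2)
  refine ⟨⟨hws_nonneg, hws_mem, hlam⟩, ?_⟩
  intro w hw0 hw2 hw1
  -- integrability facts
  have hiw2 : Integrable (fun x => (w x) ^ 2) P := hw2.integrable_sq
  have hiws2 : Integrable (fun x => (ws x) ^ 2) P := hws_mem.integrable_sq
  have hiw : Integrable w P := hw2.integrable one_le_two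
  have hiws : Integrable ws P := hws_mem.integrable one_le_two
  have hifw : Integrable (fun x => f x * w x) P := by
    have := (hf.smul (r := 1) hw2).integrable le_rfl
    simpa [Pi.smul_apply, smul_eq_mul, mul_comm, Pi.mul_def] using this
  have hifws : Integrable (fun x => f x * ws x) P := by
    have := (hf.smul (r := 1) hws_mem).integrable le_rfl
    simpa [Pi.smul_apply, smul_eq_mul, mul_comm, Pi.mul_def] using this
  -- the key integral inequality
  have hIws : Integrable (fun x => (1 / μ) * (ws x) ^ 2 - (f x - lamstar) * ws x) P := by
    have : Integrable (fun x => (f x - lamstar) * ws x) P := by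
      have h := hifws.sub (hiws.const_mul lamstar)
      refine h.congr (Filter.Eventually.of_forall fun x => by simp only [Pi.sub_apply]; ring)
    exact (hiws2.const_mul _).sub this
  have hIw : Integrable (fun x => (1 / μ) * (w x) ^ 2 - (f x - lamstar) * w x) P := by
    have : Integrable (fun x => (f x - lamstar) * w x) P := by
      have h := hifw.sub (hiw.const_mul lamstar)
      refine h.congr (Filter.Eventually.of_forall fun x => by simp only [Pi.sub_apply]; ring)
    exact (hiw2.const_mul _).sub this
  have hmono : (∫ x, ((1 / μ) * (ws x) ^ 2 - (f x - lamstar) * ws x) ∂P)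
      ≤ ∫ x, ((1 / μ) * (w x) ^ 2 - (f x - lamstar) * w x) ∂P := by
    refine integral_mono_ae hIws hIw ?_
    filter_upwards [hw0] with x hx
    exact key_pt μ (f x - lamstar) (w x) hμ hx
  -- expand the integrals
  have expand : ∀ (v : X → ℝ), Integrable v P → Integrable (fun x => (v x) ^ 2) P →
      Integrable (fun x => f x * v x) P →
      (∫ x, ((1 / μ) * (v x) ^ 2 - (f x - lamstar) * v x) ∂P)
        = (1 / μ) * (∫ x, (v x) ^ 2 ∂P) - (∫ x, f x * v x ∂P) + lamstar * (∫ x, v x ∂P) := by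
    intro v hv hv2 hfv
    have h1 : Integrable (fun x => (1 / μ) * (v x) ^ 2) P := hv2.const_mul _
    have h2 : Integrable (fun x => (f x - lamstar) * v x) P := by
      have h := hfv.sub (hv.const_mul lamstar)
      exact h.congr (Filter.Eventually.of_forall fun x => by simp only [Pi.sub_apply]; ring)
    rw [integral_sub h1 h2, integral_const_mul]
    have heq : (fun x => (f x - lamstar) * v x) = fun x => f x * v x - lamstar * v x :=
      funext fun x => by ring
    rw [heq, integral_sub hfv (hv.const_mul lamstar), integral_const_mul]
    ring
  rw [expand ws hiws hiws2 hifws, expand w hiw hiw2 hifw, hlam, hw1] at hmono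
  -- conclude
  have hexp1 : (∫ x, ((ws x) ^ 2 - 1) ∂P) = (∫ x, (ws x) ^ 2 ∂P) - 1 := by
    rw [integral_sub hiws2 (integrable_const 1)]
    simp
  have hexp2 : (∫ x, ((w x) ^ 2 - 1) ∂P) = (∫ x, (w x) ^ 2 ∂P) - 1 := by
    rw [integral_sub hiw2 (integrable_const 1)]
    simp
  simp only [hexp1, hexp2]
  linarith
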